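/- Let U, V be n×k real matrices with orthonormal columns, and suppose sin θ(U,V) := ‖(U_⊥)ᵀ V‖ ≤ ε for some ε < 1/2. Then there exists a unitary (orthogonal) matrix Q ∈ ℝ^{k×k} such that ‖UQ − V‖ ≤ 2ε, where ‖·‖ denotes the spectral (operator) norm. -/

import Mathlib

open Matrix
open scoped RealInnerProductSpace

/-- The spectral (operator) norm of a real matrix, via its action on Euclidean space. -/
noncomputable def opNorm {m n : ℕ} (A : Matrix (Fin m) (Fin n) ℝ) : ℝ :=
  ‖LinearMap.toContinuousLinearMap (Matrix.toEuclideanLin A)‖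

/-- The Frobenius norm of a real matrix. -/
noncomputable def frobNorm {m n : ℕ} (A : Matrix (Fin m) (Fin n) ℝ) : ℝ :=
  Real.sqrt (∑ i, ∑ j, (A i j) ^ 2)

noncomputable def clm {m n : ℕ} (A : Matrix (Fin m) (Fin n) ℝ) :
    EuclideanSpace ℝ (Fin n) →L[ℝ] EuclideanSpace ℝ (Fin m) :=
  LinearMap.toContinuousLinearMap (Matrix.toEuclideanLin A)

lemma opNorm_def {m n : ℕ} (A : Matrix (Fin m) (Fin n) ℝ) : opNorm A = ‖clm A‖ := rfl

lemma clm_apply {m n : ℕ} (A : Matrix (Fin m) (Fin n) ℝ) (x : EuclideanSpace ℝ (Fin n)) (i : Fin m) :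
    clm A x i = ∑ j, A i j * x j := rfl

lemma inner_euc {n : ℕ} (x y : EuclideanSpace ℝ (Fin n)) : ⟪x, y⟫ = ∑ i, x i * y i := by
  simp [PiLp.inner_apply, RCLike.inner_apply, conj_trivial]
  exact Finset.sum_congr rfl fun _ _ => mul_comm _ _

lemma clm_mul {m n p : ℕ} (A : Matrix (Fin m) (Fin n) ℝ) (B : Matrix (Fin n) (Fin p) ℝ) :
    clm (A * B) = (clm A).comp (clm B) := by
  ext x i
  simp [clm_apply, Matrix.mul_apply, Finset.sum_mul, Finset.mul_sum]
  rw [Finset.sum_comm]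
  congr 1; ext j; congr 1; ext l; ring

lemma clm_mul_apply {m n p : ℕ} (A : Matrix (Fin m) (Fin n) ℝ) (B : Matrix (Fin n) (Fin p) ℝ)
    (x : EuclideanSpace ℝ (Fin p)) : clm (A * B) x = clm A (clm B x) := by rw [clm_mul]; rfl

lemma clm_sub {m n : ℕ} (A B : Matrix (Fin m) (Fin n) ℝ) : clm (A - B) = clm A - clm B := by
  simp [clm, map_sub]

lemma clm_add {m n : ℕ} (A B : Matrix (Fin m) (Fin n) ℝ) : clm (A + B) = clm A + clm B := by
  simp [clm, map_add]

lemma clm_one {k : ℕ} (x : EuclideanSpace ℝ (Fin k)) : clm (1 : Matrix (Fin k) (Fin k) ℝ) x = x := by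
  ext i
  simp [clm_apply, Matrix.one_apply]

lemma inner_clm_transpose {m n : ℕ} (A : Matrix (Fin m) (Fin n) ℝ)
    (x : EuclideanSpace ℝ (Fin m)) (y : EuclideanSpace ℝ (Fin n)) :
    ⟪clm Aᵀ x, y⟫ = ⟪x, clm A y⟫ := by
  simp only [inner_euc, clm_apply, Matrix.transpose_apply, Finset.sum_mul, Finset.mul_sum]
  rw [Finset.sum_comm]
  congr 1; ext j; congr 1; ext l; ring

lemma inner_clm_transpose' {m n : ℕ} (A : Matrix (Fin m) (Fin n) ℝ)
    (x : EuclideanSpace ℝ (Fin n)) (y : EuclideanSpace ℝ (Fin m)) :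
    ⟪x, clm Aᵀ y⟫ = ⟪clm A x, y⟫ := by
  rw [real_inner_comm, inner_clm_transpose, real_inner_comm]

lemma dot_eq_inner {k : ℕ} (A : Matrix (Fin k) (Fin k) ℝ) (x : Fin k → ℝ) :
    dotProduct (star x) (A *ᵥ x) =
      ⟪(WithLp.equiv 2 (Fin k → ℝ)).symm x, clm A ((WithLp.equiv 2 (Fin k → ℝ)).symm x)⟫ := by
  simp [inner_euc, clm_apply, dotProduct, Matrix.mulVec]

lemma inner_eq_dot {k : ℕ} (A : Matrix (Fin k) (Fin k) ℝ) (x : EuclideanSpace ℝ (Fin k)) :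
    ⟪x, clm A x⟫ =
      dotProduct (star (WithLp.equiv 2 (Fin k → ℝ) x)) (A *ᵥ (WithLp.equiv 2 (Fin k → ℝ) x)) := by
  simp [inner_euc, clm_apply, dotProduct, Matrix.mulVec]

lemma opNorm_nonneg' {m n : ℕ} (A : Matrix (Fin m) (Fin n) ℝ) : 0 ≤ opNorm A := norm_nonneg _

lemma le_opNorm' {m n : ℕ} (A : Matrix (Fin m) (Fin n) ℝ) (x : EuclideanSpace ℝ (Fin n)) :
    ‖clm A x‖ ≤ opNorm A * ‖x‖ := (clm A).le_opNorm x

lemma opNorm_le' {m n : ℕ} (A : Matrix (Fin m) (Fin n) ℝ) {c : ℝ} (hc : 0 ≤ c)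
    (h : ∀ x, ‖clm A x‖ ≤ c * ‖x‖) : opNorm A ≤ c :=
  ContinuousLinearMap.opNorm_le_bound _ hc h

lemma norm_clm_isometry {n k : ℕ} {U : Matrix (Fin n) (Fin k) ℝ} (hU : Uᵀ * U = 1)
    (x : EuclideanSpace ℝ (Fin k)) : ‖clm U x‖ = ‖x‖ := by
  have h1 : ⟪clm U x, clm U x⟫ = ⟪x, x⟫ := by
    rw [← inner_clm_transpose U (clm U x) x, ← clm_mul_apply, hU, clm_one]
  have h2 := congrArg Real.sqrt h1
  rwa [real_inner_self_eq_norm_sq, real_inner_self_eq_norm_sq,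
    Real.sqrt_sq (norm_nonneg _), Real.sqrt_sq (norm_nonneg _)] at h2

lemma opNorm_mul_isometry {n k p : ℕ} {U : Matrix (Fin n) (Fin k) ℝ} (hU : Uᵀ * U = 1)
    (B : Matrix (Fin k) (Fin p) ℝ) : opNorm (U * B) ≤ opNorm B := by
  refine opNorm_le' _ (opNorm_nonneg' B) fun x => ?_
  rw [clm_mul_apply, norm_clm_isometry hU]
  exact le_opNorm' B x

lemma opNorm_transpose_le {m n : ℕ} (A : Matrix (Fin m) (Fin n) ℝ) :
    opNorm Aᵀ ≤ opNorm A := by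
  refine opNorm_le' _ (opNorm_nonneg' A) fun y => ?_
  set t := ‖clm Aᵀ y‖ with ht
  have h1 : t ^ 2 = ⟪clm Aᵀ y, clm Aᵀ y⟫ := (real_inner_self_eq_norm_sq _).symm
  have h2 : ⟪clm Aᵀ y, clm Aᵀ y⟫ = ⟪y, clm A (clm Aᵀ y)⟫ := by
    rw [← inner_clm_transpose A y (clm Aᵀ y)]
  have h3 : ⟪y, clm A (clm Aᵀ y)⟫ ≤ ‖y‖ * (opNorm A * t) :=
    le_trans (real_inner_le_norm _ _) (by
      have := le_opNorm' A (clm Aᵀ y)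
      nlinarith [norm_nonneg y])
  have h4 : t ^ 2 ≤ ‖y‖ * (opNorm A * t) := by rw [h1, h2]; exact h3
  rcases eq_or_lt_of_le (norm_nonneg (clm Aᵀ y)) with h | h
  · rw [ht, ← h]
    exact mul_nonneg (opNorm_nonneg' A) (norm_nonneg _)
  · nlinarith

lemma opNorm_mul_le' {m n p : ℕ} (A : Matrix (Fin m) (Fin n) ℝ) (B : Matrix (Fin n) (Fin p) ℝ) :
    opNorm (A * B) ≤ opNorm A * opNorm B := by
  rw [opNorm_def, clm_mul]
  exact ContinuousLinearMap.opNorm_comp_le _ _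

lemma opNorm_sub_le' {m n : ℕ} (A B : Matrix (Fin m) (Fin n) ℝ) :
    opNorm (A - B) ≤ opNorm A + opNorm B := by
  rw [opNorm_def, clm_sub]
  exact norm_sub_le _ _

lemma opNorm_inv_le_one {k : ℕ} {S B : Matrix (Fin k) (Fin k) ℝ}
    (hS : ∀ x : EuclideanSpace ℝ (Fin k), ‖x‖ ^ 2 ≤ ⟪x, clm S x⟫)
    (hSB : S * B = 1) : opNorm B ≤ 1 := by
  refine opNorm_le' _ zero_le_one fun x => ?_
  set y := clm B x with hy
  have hSy : clm S y = x := by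
    rw [hy, ← clm_mul_apply, hSB, clm_one]
  have h1 : ‖y‖ ^ 2 ≤ ⟪y, x⟫ := by rw [← hSy]; exact hS y
  have h2 : ⟪y, x⟫ ≤ ‖y‖ * ‖x‖ := real_inner_le_norm _ _
  rcases eq_or_lt_of_le (norm_nonneg y) with h | h
  · rw [← h]; simp [norm_nonneg]
  · nlinarith

open scoped MatrixOrder in
lemma polar_approx {d k : ℕ} (ε : ℝ) (hε0 : 0 ≤ ε) (hε1 : ε < 1)
    (M : Matrix (Fin k) (Fin k) ℝ) (N : Matrix (Fin d) (Fin k) ℝ)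
    (hMN : Mᵀ * M + Nᵀ * N = 1) (hNop : opNorm N ≤ ε) :
    ∃ Q : Matrix (Fin k) (Fin k) ℝ, Qᵀ * Q = 1 ∧ Q * Qᵀ = 1 ∧ opNorm (Q - M) ≤ ε * ε := by
  have h1A : (1 : Matrix (Fin k) (Fin k) ℝ) - Mᵀ * M = Nᵀ * N := by rw [← hMN]; abel
  have hAx : ∀ x : EuclideanSpace ℝ (Fin k),
      ⟪x, clm (Mᵀ * M) x⟫ = ‖x‖ ^ 2 - ‖clm N x‖ ^ 2 := by
    intro x
    have e1 : clm (Mᵀ * M) x = x - clm (Nᵀ * N) x := by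
      have h : Mᵀ * M = 1 - Nᵀ * N := by rw [← h1A]; abel
      rw [h, clm_sub]
      simp [clm_one]
    rw [e1, inner_sub_right, clm_mul_apply, inner_clm_transpose',
      real_inner_self_eq_norm_sq, real_inner_self_eq_norm_sq]
  have hNx : ∀ x : EuclideanSpace ℝ (Fin k), ‖clm N x‖ ≤ ε * ‖x‖ := by
    intro x
    calc ‖clm N x‖ ≤ opNorm N * ‖x‖ := le_opNorm' N x
    _ ≤ ε * ‖x‖ := by nlinarith [opNorm_nonneg' N, norm_nonneg x]
  have hApos : (Mᵀ * M).PosDef := by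
    refine Matrix.PosDef.of_dotProduct_mulVec_pos ?_ fun x hx => ?_
    · have h := Matrix.isHermitian_conjTranspose_mul_self M
      rwa [Matrix.conjTranspose_eq_transpose_of_trivial] at h
    · rw [dot_eq_inner]
      set x' : EuclideanSpace ℝ (Fin k) := (WithLp.equiv 2 (Fin k → ℝ)).symm x with hx'
      have hxe : x' ≠ 0 := by
        intro h
        exact hx (by simpa [hx'] using congrArg (WithLp.equiv 2 (Fin k → ℝ)) h)
      have hxpos : 0 < ‖x'‖ := norm_pos_iff.mpr hxe
      rw [hAx x']
      have h4 := hNx x'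
      have h5 : ‖clm N x'‖ ^ 2 ≤ ε ^ 2 * ‖x'‖ ^ 2 := by nlinarith [norm_nonneg (clm N x')]
      have hε2 : ε ^ 2 < 1 := by nlinarith
      nlinarith [mul_pos hxpos hxpos]
  have hTsq : CFC.sqrt (Mᵀ * M) * CFC.sqrt (Mᵀ * M) = Mᵀ * M :=
    CFC.sqrt_mul_sqrt_self _ hApos.posSemidef.nonneg
  set T := CFC.sqrt (Mᵀ * M) with hT
  have hTpsd : T.PosSemidef := (CFC.sqrt_nonneg (Mᵀ * M)).posSemidef
  have hTtr : Tᵀ = T := by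
    have h : Tᴴ = T := hTpsd.1
    rwa [Matrix.conjTranspose_eq_transpose_of_trivial] at h
  have hAdet : IsUnit (Mᵀ * M).det := hApos.det_pos.ne'.isUnit
  have hTTi : T * (T * (Mᵀ * M)⁻¹) = 1 := by
    rw [← Matrix.mul_assoc, hTsq, Matrix.mul_nonsing_inv _ hAdet]
  set Ti := T * (Mᵀ * M)⁻¹ with hTi
  have hTiT : Ti * T = 1 := mul_eq_one_comm.mp hTTi
  have hTitr : Tiᵀ * T = 1 := by
    have h := congrArg Matrix.transpose hTTi
    rwa [Matrix.transpose_mul, Matrix.transpose_one, hTtr] at h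
  have hQ1 : (M * Ti)ᵀ * (M * Ti) = 1 := by
    calc (M * Ti)ᵀ * (M * Ti) = Tiᵀ * (Mᵀ * M) * Ti := by
          rw [Matrix.transpose_mul]
          simp only [Matrix.mul_assoc]
    _ = Tiᵀ * (T * T) * Ti := by rw [hTsq]
    _ = (Tiᵀ * T) * (T * Ti) := by simp only [Matrix.mul_assoc]
    _ = 1 := by rw [hTitr, hTTi, Matrix.one_mul]
  have hQT : (M * Ti) * T = M := by
    rw [Matrix.mul_assoc, hTiT, Matrix.mul_one]
  -- the matrix S = 1 + T
  have hTpos : ∀ x : EuclideanSpace ℝ (Fin k), 0 ≤ ⟪x, clm T x⟫ := by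
    intro x
    rw [inner_eq_dot]
    exact hTpsd.dotProduct_mulVec_nonneg _
  have hSlow : ∀ x : EuclideanSpace ℝ (Fin k),
      ‖x‖ ^ 2 ≤ ⟪x, clm (1 + T) x⟫ := by
    intro x
    have e1 : clm (1 + T) x = x + clm T x := by rw [clm_add]; simp [clm_one]
    rw [e1, inner_add_right, real_inner_self_eq_norm_sq]
    have := hTpos x
    linarith
  have hSpos : ((1 : Matrix (Fin k) (Fin k) ℝ) + T).PosDef :=
    Matrix.PosDef.add_posSemidef Matrix.PosDef.one hTpsd
  have hSdet : IsUnit ((1 : Matrix (Fin k) (Fin k) ℝ) + T).det := hSpos.det_pos.ne'.isUnit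
  have hSinv : ((1 : Matrix (Fin k) (Fin k) ℝ) + T) * (1 + T)⁻¹ = 1 :=
    Matrix.mul_nonsing_inv _ hSdet
  have hfact : ((1 : Matrix (Fin k) (Fin k) ℝ) - Mᵀ * M) * (1 + T)⁻¹ = 1 - T := by
    have h : ((1 : Matrix (Fin k) (Fin k) ℝ) - T) * (1 + T) = 1 - Mᵀ * M := by
      rw [Matrix.sub_mul, Matrix.mul_add, Matrix.mul_add, Matrix.one_mul, Matrix.one_mul,
        Matrix.mul_one, hTsq]
      abel
    rw [← h, Matrix.mul_assoc, hSinv, Matrix.mul_one]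
  have hSinv_norm : opNorm ((1 : Matrix (Fin k) (Fin k) ℝ) + T)⁻¹ ≤ 1 :=
    opNorm_inv_le_one hSlow hSinv
  have hNtN : opNorm (Nᵀ * N) ≤ ε * ε := by
    calc opNorm (Nᵀ * N) ≤ opNorm Nᵀ * opNorm N := opNorm_mul_le' _ _
    _ ≤ ε * ε := mul_le_mul (le_trans (opNorm_transpose_le N) hNop) hNop (opNorm_nonneg' N) hε0
  have h1T : opNorm ((1 : Matrix (Fin k) (Fin k) ℝ) - T) ≤ ε * ε := by
    rw [← hfact]
    calc opNorm ((1 - Mᵀ * M) * (1 + T)⁻¹)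
        ≤ opNorm (1 - Mᵀ * M) * opNorm ((1 : Matrix (Fin k) (Fin k) ℝ) + T)⁻¹ :=
          opNorm_mul_le' _ _
    _ ≤ (ε * ε) * 1 := by
        apply mul_le_mul _ hSinv_norm (opNorm_nonneg' _) (by nlinarith)
        rw [h1A]; exact hNtN
    _ = ε * ε := mul_one _
  have hQMfact : M * Ti - M = (M * Ti) * (1 - T) := by
    rw [Matrix.mul_sub, Matrix.mul_one, hQT]
  have hQMnorm : opNorm (M * Ti - M) ≤ ε * ε := by
    rw [hQMfact]
    exact le_trans (opNorm_mul_isometry hQ1 _) h1T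
  exact ⟨M * Ti, hQ1, mul_eq_one_comm.mp hQ1, hQMnorm⟩

/-- If `U, V : n×k` have orthonormal columns and `‖(U⊥)ᵀ V‖ ≤ ε < 1/2`
(for `U⊥` an `n×(n−k)` orthonormal basis of the complement of the range of `U`), then
there is an orthogonal `Q : k×k` with `‖U*Q − V‖ ≤ 2ε` in spectral norm. -/
theorem stmt0 {n k : ℕ} (U V : Matrix (Fin n) (Fin k) ℝ)
    (Uperp : Matrix (Fin n) (Fin (n - k)) ℝ)
    (hU : Uᵀ * U = 1) (hV : Vᵀ * V = 1)
    (hUperp : Uperpᵀ * Uperp = 1) (hperp : Uᵀ * Uperp = 0)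
    (ε : ℝ) (hε : ε < 1 / 2)
    (hsin : opNorm (Uperpᵀ * V) ≤ ε) :
    ∃ Q : Matrix (Fin k) (Fin k) ℝ, Qᵀ * Q = 1 ∧ Q * Qᵀ = 1 ∧
      opNorm (U * Q - V) ≤ 2 * ε := by
  have hε0 : 0 ≤ ε := le_trans (opNorm_nonneg' _) hsin
  rcases le_or_gt k n with hkn | hkn
  swap
  · exfalso
    have h1 : (1 : Matrix (Fin k) (Fin k) ℝ).rank = k := by
      rw [Matrix.rank_one, Fintype.card_fin]
    have h2 := Matrix.rank_mul_le_left Uᵀ U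
    have h3 := Uᵀ.rank_le_card_width
    rw [hU, h1] at h2
    rw [Fintype.card_fin] at h3
    omega
  -- main case
  have e : Fin n ≃ Fin k ⊕ Fin (n - k) :=
    (finCongr (by omega : n = k + (n - k))).trans finSumFinEquiv.symm
  have hperp' : Uperpᵀ * U = 0 := by
    have h := congrArg Matrix.transpose hperp
    simpa [Matrix.transpose_mul] using h
  have hblock : fromRows Uᵀ Uperpᵀ * fromCols U Uperp = 1 := by
    rw [fromRows_mul_fromCols, hU, hUperp, hperp, hperp', Matrix.fromBlocks_one]
  have hW : U * Uᵀ + Uperp * Uperpᵀ = 1 := by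
    have h := (fromCols_mul_fromRows_eq_one_comm e U Uperp Uᵀ Uperpᵀ).mpr hblock
    rwa [fromCols_mul_fromRows] at h
  have hMN : (Uᵀ * V)ᵀ * (Uᵀ * V) + (Uperpᵀ * V)ᵀ * (Uperpᵀ * V) = 1 := by
    have h : (Uᵀ * V)ᵀ * (Uᵀ * V) + (Uperpᵀ * V)ᵀ * (Uperpᵀ * V)
        = Vᵀ * ((U * Uᵀ + Uperp * Uperpᵀ) * V) := by
      simp [Matrix.transpose_mul, Matrix.add_mul, Matrix.mul_add, Matrix.mul_assoc]
    rw [h, hW, Matrix.one_mul, hV]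
  obtain ⟨Q, hQ1, hQ2, hQM⟩ :=
    polar_approx ε hε0 (by linarith) (Uᵀ * V) (Uperpᵀ * V) hMN hsin
  have hV' : U * (Uᵀ * V) + Uperp * (Uperpᵀ * V) = V := by
    rw [← Matrix.mul_assoc, ← Matrix.mul_assoc, ← Matrix.add_mul, hW, Matrix.one_mul]
  have hUQV : U * Q - V = U * (Q - Uᵀ * V) - Uperp * (Uperpᵀ * V) := by
    rw [Matrix.mul_sub]
    conv_lhs => rw [← hV']
    abel
  refine ⟨Q, hQ1, hQ2, ?_⟩
  rw [hUQV]
  calc opNorm (U * (Q - Uᵀ * V) - Uperp * (Uperpᵀ * V))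
      ≤ opNorm (U * (Q - Uᵀ * V)) + opNorm (Uperp * (Uperpᵀ * V)) := opNorm_sub_le' _ _
    _ ≤ (ε * ε) + ε := add_le_add (le_trans (opNorm_mul_isometry hU _) hQM)
        (le_trans (opNorm_mul_isometry hUperp _) hsin)
    _ ≤ 2 * ε := by nlinarith
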